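/- Let R be a right artinian ring. Then there are only finitely many isomorphism classes of indecomposable injective right R-modules; that is, there exists a finite list of right R-modules E₁, …, Eₙ such that every indecomposable injective right R-module is isomorphic to some Eᵢ. (Hence the injective spectrum of a right artinian ring is a finite discrete space.) -/

import Mathlib

open MulOpposite

universe u

/-- A module is indecomposable if it is nonzero and is not the internal direct sum of
two nonzero submodules. -/
def IsIndecomposable (R M : Type*) [Ring R] [AddCommGroup M] [Module R M] : Prop :=
  (∃ x : M, x ≠ 0) ∧
    ∀ A B : Submodule R M, A ⊓ B = ⊥ → A ⊔ B = ⊤ → A = ⊥ ∨ B = ⊥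

section Aux

variable {A : Type u} [Ring A]

/-- `Ess N D` : `N` is an essential submodule of `D`. -/
def Ess {E : Type u} [AddCommGroup E] [Module A E] (N D : Submodule A E) : Prop :=
  N ≤ D ∧ ∀ X : Submodule A E, X ≤ D → X ⊓ N = ⊥ → X = ⊥

variable {E : Type u} [AddCommGroup E] [Module A E]

lemma ess_refl (N : Submodule A E) : Ess N N :=
  ⟨le_rfl, fun X hX h => by rwa [inf_eq_left.mpr hX] at h⟩

lemma ess_trans {N D D' : Submodule A E} (h1 : Ess N D) (h2 : Ess D D') : Ess N D' := by
  refine ⟨h1.1.trans h2.1, fun X hX hXN => ?_⟩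
  have h3 : (X ⊓ D) ⊓ N = ⊥ :=
    le_bot_iff.mp (le_trans (inf_le_inf_right N inf_le_left) hXN.le)
  have h4 : X ⊓ D = ⊥ := h1.2 _ inf_le_right h3
  exact h2.2 X hX h4

/-- In an essential extension, any nonzero element of `D` has a multiple landing
nonzero in `N`. -/
lemma Ess.exists_smul_mem {N D : Submodule A E} (h : Ess N D) {y : E} (hy : y ∈ D)
    (hy0 : y ≠ 0) : ∃ a : A, a • y ∈ N ∧ a • y ≠ 0 := by
  by_contra hcon
  push_neg at hcon
  have hspan : Submodule.span A {y} ⊓ N = ⊥ := by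
    rw [eq_bot_iff]
    rintro z ⟨hz1, hz2⟩
    obtain ⟨a, rfl⟩ := Submodule.mem_span_singleton.mp hz1
    by_cases h0 : a • y = 0
    · simp [h0]
    · exact absurd (hcon a hz2) (by simpa using h0)
  have := h.2 _ ((Submodule.span_singleton_le_iff_mem _ _).mpr hy) hspan
  exact hy0 (by simpa using Submodule.span_eq_bot.mp this y rfl)

/-- Zorn: a maximal submodule containing `B` and meeting `N` trivially exists. -/
lemma exists_complement (N B : Submodule A E) (hBN : B ⊓ N = ⊥) :
    ∃ C, B ≤ C ∧ C ⊓ N = ⊥ ∧ ∀ C', C ≤ C' → C' ⊓ N = ⊥ → C' = C := by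
  have hz : ∀ c ⊆ {C : Submodule A E | C ⊓ N = ⊥}, IsChain (· ≤ ·) c → ∀ y ∈ c,
      ∃ ub ∈ {C : Submodule A E | C ⊓ N = ⊥}, ∀ z ∈ c, z ≤ ub := by
    intro c hcs hchain y hy
    refine ⟨sSup c, ?_, fun z hz => le_sSup hz⟩
    rw [Set.mem_setOf_eq, eq_bot_iff]
    rintro z ⟨hz1, hz2⟩
    obtain ⟨p, hp, hzp⟩ := (Submodule.mem_sSup_of_directed ⟨y, hy⟩
      hchain.directedOn).mp hz1
    have := hcs hp
    rw [Set.mem_setOf_eq, eq_bot_iff] at this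
    exact this ⟨hzp, hz2⟩
  obtain ⟨C, hBC, hC⟩ := zorn_le_nonempty₀ _ hz B hBN
  exact ⟨C, hBC, hC.1, fun C' h1 h2 => le_antisymm (hC.2 h2 h1) h1⟩

/-- Zorn: a maximal essential extension of `N` inside `E` exists. -/
lemma exists_max_ess (N : Submodule A E) :
    ∃ D, Ess N D ∧ ∀ D', Ess N D' → D ≤ D' → D' = D := by
  have hz : ∀ c ⊆ {D : Submodule A E | Ess N D}, IsChain (· ≤ ·) c → ∀ y ∈ c,
      ∃ ub ∈ {D : Submodule A E | Ess N D}, ∀ z ∈ c, z ≤ ub := by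
    intro c hcs hchain y hy
    refine ⟨sSup c, ⟨le_trans (hcs hy).1 (le_sSup hy), ?_⟩, fun z hz => le_sSup hz⟩
    intro X hX hXN
    rw [eq_bot_iff]
    intro z hz
    obtain ⟨p, hp, hzp⟩ := (Submodule.mem_sSup_of_directed ⟨y, hy⟩
      hchain.directedOn).mp (hX hz)
    by_contra hz0
    obtain ⟨a, ha1, ha2⟩ := (hcs hp).exists_smul_mem hzp (by simpa using hz0)
    have haz : a • z ∈ X ⊓ N := ⟨X.smul_mem a hz, ha1⟩
    rw [hXN] at haz
    exact ha2 (by simpa using haz)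
  obtain ⟨D, _, hD⟩ := zorn_le_nonempty₀ _ hz N (ess_refl N)
  exact ⟨D, hD.1, fun D' h1 h2 => le_antisymm (hD.2 h1 h2) h2⟩


variable {A : Type u} [Ring A] {E : Type u} [AddCommGroup E] [Module A E]

/-- Over a (left) artinian ring, any module with a nonzero element has a simple submodule. -/
lemma exists_simple_submodule [IsArtinian A A] {x : E} (hx : x ≠ 0) :
    ∃ S : Submodule A E, IsSimpleModule A S := by
  set N : Submodule A E := LinearMap.range (LinearMap.toSpanSingleton A E x) with hN
  have : IsArtinian A N := isArtinian_of_surjective _ _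
    (LinearMap.toSpanSingleton A E x).surjective_rangeRestrict
  have hxN : x ∈ N := ⟨1, by simp⟩
  have hNbot : (⊤ : Submodule A N) ≠ ⊥ := by
    intro h
    have : (⟨x, hxN⟩ : N) = 0 := by
      have := Submodule.eq_bot_iff _ |>.mp h ⟨x, hxN⟩ trivial
      exact this
    exact hx (by simpa using congrArg Subtype.val this)
  obtain ⟨S, hS, hmin⟩ := IsArtinian.set_has_minimal {S : Submodule A N | S ≠ ⊥}
    ⟨⊤, hNbot⟩
  have hatom : IsAtom S := by
    refine ⟨hS, fun b hb => ?_⟩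
    by_contra hb0
    exact absurd hb (not_lt_of_ge (le_of_eq (by exact False.elim (hmin b hb0 hb))))
  have hsimple : IsSimpleModule A S := isSimpleModule_iff_isAtom.mpr hatom
  refine ⟨S.map N.subtype, ?_⟩
  exact IsSimpleModule.congr (Submodule.equivMapOfInjective N.subtype
    N.injective_subtype S).symm

/-- Extension property of an injective module against submodule inclusions. -/
lemma Module.Injective.extend {M : Type u} [AddCommGroup M] [Module A M]
    (inj : Module.Injective A E) (p : Submodule A M) (g : p →ₗ[A] E) :
    ∃ h : M →ₗ[A] E, ∀ x : p, h x = g x :=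
  inj.out p.subtype p.injective_subtype g

/-- An indecomposable injective module is uniform. -/
lemma inf_ne_bot_of_indec_inj (hindec : IsIndecomposable A E)
    (hinj : Module.Injective A E) {X Y : Submodule A E} (hX : X ≠ ⊥) (hY : Y ≠ ⊥) :
    X ⊓ Y ≠ ⊥ := by
  intro hXY
  obtain ⟨D, hessD, hmaxD⟩ := exists_max_ess Y
  obtain ⟨D', -, hD'D, hmaxD'⟩ := exists_complement D ⊥ (by simp)
  set q : E →ₗ[A] E ⧸ D' := D'.mkQ with hq
  have hqker : ∀ d ∈ D, q d = 0 → d = 0 := by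
    intro d hd h0
    have : d ∈ D' ⊓ D := ⟨(Submodule.Quotient.mk_eq_zero D').mp h0, hd⟩
    rw [hD'D] at this; simpa using this
  set φ : D →ₗ[A] E ⧸ D' := q.comp D.subtype with hφ
  have hφinj : Function.Injective φ := by
    intro a b hab
    ext
    have := sub_eq_zero.mpr hab
    rw [← map_sub] at this
    have := hqker _ (D.sub_mem a.2 b.2) this
    exact sub_eq_zero.mp this
  -- the image of D is essential in E ⧸ D'
  have hessφ : Ess (LinearMap.range φ) (⊤ : Submodule A (E ⧸ D')) := by
    refine ⟨le_top, fun X hXle hXφ => ?_⟩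
    by_contra hX0
    have hX' : X.comap q ⊓ D ≠ ⊥ := by
      intro h
      have h1 : X.comap q = D' := hmaxD' _ (by
          intro x hx
          exact Submodule.mem_comap.mpr (by simp [hq, (Submodule.Quotient.mk_eq_zero D').mpr hx])) h
      have : X = ⊥ := by
        rw [← Submodule.map_comap_eq_of_surjective (Submodule.mkQ_surjective D') X, h1]
        rw [eq_bot_iff]
        rintro z ⟨w, hw, rfl⟩
        simp [hq, (Submodule.Quotient.mk_eq_zero D').mpr hw]
      exact hX0 this
    obtain ⟨z, hz, hz0⟩ := Submodule.exists_mem_ne_zero_of_ne_bot hX'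
    have hqz : q z ∈ X ⊓ LinearMap.range φ :=
      ⟨hz.1, ⟨⟨z, hz.2⟩, rfl⟩⟩
    rw [hXφ] at hqz
    exact hz0 (hqker z hz.2 (by simpa using hqz))
  set e : D ≃ₗ[A] LinearMap.range φ := LinearEquiv.ofInjective φ hφinj with he
  obtain ⟨h, hh⟩ := hinj.extend (LinearMap.range φ) (D.subtype.comp e.symm.toLinearMap)
  have hhinj : Function.Injective h := by
    rw [← LinearMap.ker_eq_bot]
    refine hessφ.2 _ le_top ?_
    rw [eq_bot_iff]
    rintro z ⟨hz1, hz2⟩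
    have h1 : h z = D.subtype (e.symm ⟨z, hz2⟩) := hh ⟨z, hz2⟩
    have h0 : h z = 0 := hz1
    have h2 : (e.symm ⟨z, hz2⟩ : E) = 0 := by rw [← h0, h1]; rfl
    have h3 : e.symm ⟨z, hz2⟩ = 0 := Subtype.ext h2
    have h4 : (⟨z, hz2⟩ : LinearMap.range φ) = 0 := by
      have := congrArg e h3
      simpa using this
    simpa using congrArg Subtype.val h4
  set g : E →ₗ[A] E := h.comp q with hg
  have hgD : ∀ d ∈ D, g d = d := by
    intro d hd
    have hmem : φ ⟨d, hd⟩ ∈ LinearMap.range φ := ⟨⟨d, hd⟩, rfl⟩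
    have h1 : g d = h (φ ⟨d, hd⟩) := rfl
    have h2 : h (φ ⟨d, hd⟩) = D.subtype (e.symm ⟨φ ⟨d, hd⟩, hmem⟩) := hh ⟨φ ⟨d, hd⟩, hmem⟩
    have h3 : e.symm ⟨φ ⟨d, hd⟩, hmem⟩ = ⟨d, hd⟩ := by
      rw [LinearEquiv.symm_apply_eq]
      rfl
    rw [h1, h2]
    rw [h3]
    rfl
  have hDle : D ≤ LinearMap.range g := fun d hd => ⟨d, hgD d hd⟩
  have hessg : Ess D (LinearMap.range g) := by
    refine ⟨hDle, fun X hXle hXD => ?_⟩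
    rw [eq_bot_iff]
    intro z hz
    by_contra hz0
    obtain ⟨x, rfl⟩ := hXle hz
    have hqx : q x ≠ 0 := by
      intro h0
      exact hz0 (by simp [hg, LinearMap.comp_apply, h0])
    obtain ⟨a, ha1, ha2⟩ := hessφ.exists_smul_mem (Submodule.mem_top) hqx
    obtain ⟨⟨d, hd⟩, had⟩ := ha1
    have key : a • g x = d := by
      have : a • g x = h (a • q x) := by simp [hg]
      rw [this, ← had]
      have := hh ⟨φ ⟨d, hd⟩, ⟨⟨d, hd⟩, rfl⟩⟩
      rw [this]
      have h3 : e.symm ⟨φ ⟨d, hd⟩, ⟨⟨d, hd⟩, rfl⟩⟩ = ⟨d, hd⟩ := by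
        rw [LinearEquiv.symm_apply_eq]; rfl
      simp only [LinearMap.comp_apply, LinearEquiv.coe_coe, h3]
      rfl
    have hd0 : d ≠ 0 := by
      rintro rfl
      rw [← had] at ha2
      exact ha2 (by rw [show (⟨(0 : E), hd⟩ : D) = 0 from rfl, map_zero])
    have : a • g x ∈ X ⊓ D := ⟨X.smul_mem a hz, key ▸ hd⟩
    rw [hXD] at this
    exact hd0 (key ▸ (by simpa using this))
  have hrange : LinearMap.range g = D := hmaxD _ (ess_trans hessD hessg) hDle
  -- decomposition E = D ⊕ ker g
  have hinfker : D ⊓ LinearMap.ker g = ⊥ := by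
    rw [eq_bot_iff]
    rintro d ⟨hd1, hd2⟩
    have h1 : g d = d := hgD d hd1
    have h0 : g d = 0 := hd2
    simpa using h1.symm.trans h0
  have hsupker : D ⊔ LinearMap.ker g = ⊤ := by
    rw [eq_top_iff]
    intro x _
    have hgx : g x ∈ D := hrange ▸ LinearMap.mem_range_self g x
    have : g (x - g x) = 0 := by
      rw [map_sub, hgD (g x) hgx, sub_self]
    have hx : x = g x + (x - g x) := by abel
    rw [hx]
    exact Submodule.add_mem_sup hgx this
  rcases hindec.2 D (LinearMap.ker g) hinfker hsupker with hD | hker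
  · exact hY (le_bot_iff.mp (hD ▸ hessD.1))
  · -- then g is injective and g ∘ g = g, so D = ⊤
    have hginj : Function.Injective g := LinearMap.ker_eq_bot.mp hker
    have hDtop : D = ⊤ := by
      rw [eq_top_iff]
      intro x _
      have hgx : g x ∈ D := hrange ▸ LinearMap.mem_range_self g x
      have : g (g x) = g x := hgD (g x) hgx
      have := hginj this
      exact this ▸ hgx
    have hXD : X ⊓ D = ⊥ := by
      refine hessD.2 _ inf_le_right ?_
      rw [eq_bot_iff]
      rintro z ⟨⟨hz1, -⟩, hz2⟩
      have : z ∈ X ⊓ Y := ⟨hz1, hz2⟩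
      rw [hXY] at this; exact this
    rw [hDtop, inf_top_eq] at hXD
    exact hX hXD

/-- Two indecomposable injective modules containing isomorphic nonzero (e.g. simple)
submodules are isomorphic. -/
lemma equiv_of_indec_inj {E' : Type u} [AddCommGroup E'] [Module A E']
    (hE : IsIndecomposable A E) (hEinj : Module.Injective A E)
    (hE' : IsIndecomposable A E') (hE'inj : Module.Injective A E')
    {S : Submodule A E} {S' : Submodule A E'} (hS : S ≠ ⊥) (hS' : S' ≠ ⊥)
    (σ : S ≃ₗ[A] S') : Nonempty (E ≃ₗ[A] E') := by
  obtain ⟨f, hf⟩ := hE'inj.extend S (S'.subtype.comp σ.toLinearMap)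
  have hfS : ∀ s : S, f s = (σ s : E') := fun s => hf s
  have hkerS : LinearMap.ker f ⊓ S = ⊥ := by
    rw [eq_bot_iff]
    rintro s ⟨hs1, hs2⟩
    have h0 : f s = 0 := hs1
    have : (σ ⟨s, hs2⟩ : E') = 0 := by rw [← hfS ⟨s, hs2⟩]; exact h0
    have : σ ⟨s, hs2⟩ = 0 := Subtype.ext this
    have : (⟨s, hs2⟩ : S) = 0 := by
      have := congrArg σ.symm this
      simpa using this
    simpa using congrArg Subtype.val this
  have hker : LinearMap.ker f = ⊥ := by
    by_contra hne
    exact inf_ne_bot_of_indec_inj hE hEinj hne hS hkerS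
  have hfinj : Function.Injective f := LinearMap.ker_eq_bot.mp hker
  have hrne : LinearMap.range f ≠ ⊥ := by
    intro h0
    refine hS ?_
    rw [eq_bot_iff]
    intro s hs
    have : f s ∈ LinearMap.range f := LinearMap.mem_range_self f s
    rw [h0] at this
    have : f s = 0 := by simpa using this
    simpa using hfinj (by simpa using this : f s = f 0)
  set e : E ≃ₗ[A] LinearMap.range f := LinearEquiv.ofInjective f hfinj with he
  obtain ⟨t, ht⟩ := hEinj.extend (LinearMap.range f) e.symm.toLinearMap
  set π : E' →ₗ[A] E' := f.comp t with hπ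
  have hπid : ∀ z ∈ LinearMap.range f, π z = z := by
    intro z hz
    have h1 : π z = f (t z) := rfl
    have h2 : t z = e.symm ⟨z, hz⟩ := ht ⟨z, hz⟩
    have h3 : f (e.symm ⟨z, hz⟩) = z := by
      have : e (e.symm ⟨z, hz⟩) = ⟨z, hz⟩ := e.apply_symm_apply _
      have := congrArg Subtype.val this
      simpa [he] using this
    rw [h1, h2, h3]
  have hinf : LinearMap.range f ⊓ LinearMap.ker π = ⊥ := by
    rw [eq_bot_iff]
    rintro z ⟨hz1, hz2⟩
    have h0 : π z = 0 := hz2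
    simpa using (hπid z hz1).symm.trans h0
  have hsup : LinearMap.range f ⊔ LinearMap.ker π = ⊤ := by
    rw [eq_top_iff]
    intro x _
    have hπx : π x ∈ LinearMap.range f := ⟨t x, rfl⟩
    have : π (x - π x) = 0 := by
      rw [map_sub, hπid (π x) hπx, sub_self]
    have hx : x = π x + (x - π x) := by abel
    rw [hx]
    exact Submodule.add_mem_sup hπx this
  rcases hE'.2 _ _ hinf hsup with h1 | h2
  · exact absurd h1 hrne
  · have hπinj : Function.Injective π := LinearMap.ker_eq_bot.mp h2
    have htop : LinearMap.range f = ⊤ := by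
      rw [eq_top_iff]
      intro x _
      have hπx : π x ∈ LinearMap.range f := ⟨t x, rfl⟩
      have : π (π x) = π x := hπid (π x) hπx
      have := hπinj this
      exact this ▸ hπx
    exact ⟨e.trans (LinearEquiv.ofTop _ htop)⟩

/-- A simple module is semisimple. -/
lemma IsSimpleModule.isSemisimpleModule' (M : Type u) [AddCommGroup M] [Module A M]
    [IsSimpleModule A M] : IsSemisimpleModule A M := by
  refine IsSemisimpleModule.of_sSup_simples_eq_top ?_
  rw [eq_top_iff]
  refine le_sSup ?_
  exact IsSimpleModule.congr Submodule.topEquiv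

/-- Over a left artinian ring, every simple module is isomorphic to `A ⧸ m` for `m` in
a fixed finite set of maximal left ideals. -/
lemma finite_simple_classes [IsArtinian A A] [Nontrivial A] :
    ∃ s : Finset (Ideal A), (∀ m ∈ s, m.IsMaximal) ∧
      ∀ (S : Type u) [AddCommGroup S] [Module A S], IsSimpleModule A S →
        ∃ m ∈ s, Nonempty (S ≃ₗ[A] (A ⧸ m)) := by
  classical
  obtain ⟨m₀, hm₀⟩ := Ideal.exists_maximal A
  have hne : ({I : Ideal A | ∃ s : Finset (Ideal A), (∀ m ∈ s, m.IsMaximal) ∧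
      I = s.inf id} : Set (Ideal A)).Nonempty :=
    ⟨m₀, {m₀}, by simpa using hm₀, by simp⟩
  obtain ⟨J₀, ⟨s, hs, hJ₀⟩, hmin⟩ := IsArtinian.set_has_minimal _ hne
  have hle : ∀ m : Ideal A, m.IsMaximal → J₀ ≤ m := by
    intro m hm
    have hmem : m ⊓ J₀ ∈ {I : Ideal A | ∃ s : Finset (Ideal A),
        (∀ m ∈ s, m.IsMaximal) ∧ I = s.inf id} := by
      refine ⟨insert m s, fun x hx => ?_, ?_⟩
      · rcases Finset.mem_insert.mp hx with rfl | hx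
        · exact hm
        · exact hs x hx
      · rw [Finset.inf_insert, ← hJ₀]; rfl
    have := hmin _ hmem
    have heq : m ⊓ J₀ = J₀ := by
      by_contra hne'
      exact this (lt_of_le_of_ne inf_le_right hne')
    exact le_of_inf_eq (by rw [inf_comm]; exact heq)
  refine ⟨s, hs, ?_⟩
  intro S _ _ hS
  obtain ⟨m, hm, ⟨eqS⟩⟩ := isSimpleModule_iff_quot_maximal.mp hS
  -- build the product of the quotients
  set P : Type u := ∀ i : {x // x ∈ s}, A ⧸ (i : Ideal A) with hP
  have hsimple : ∀ i : {x // x ∈ s}, IsSimpleModule A (A ⧸ (i : Ideal A)) := fun i =>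
    isSimpleModule_iff_quot_maximal.mpr ⟨i, hs i i.2, ⟨LinearEquiv.refl A _⟩⟩
  set g : A →ₗ[A] P := LinearMap.pi (fun i => Submodule.mkQ (i : Ideal A)) with hg
  have hkerg : LinearMap.ker g = J₀ := by
    rw [hg, LinearMap.ker_pi, hJ₀, Finset.inf_eq_iInf]
    simp only [Submodule.ker_mkQ, id_eq]
    exact iInf_subtype'' (fun x => x ∈ s) (fun x : Ideal A => x)
  have hss : IsSemisimpleModule A P := by
    have h1 : ∀ i : {x // x ∈ s}, IsSemisimpleModule A
        (LinearMap.range (LinearMap.single A (fun j : {x // x ∈ s} => A ⧸ (j : Ideal A)) i)) := by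
      intro i
      have := hsimple i
      have : IsSemisimpleModule A (A ⧸ (i : Ideal A)) := IsSimpleModule.isSemisimpleModule' _
      exact IsSemisimpleModule.range _
    exact isSemisimpleModule_of_isSemisimpleModule_submodule' h1 (LinearMap.iSup_range_single A _)
  obtain ⟨C, hC⟩ := exists_isCompl (LinearMap.range g)
  set pr : P →ₗ[A] LinearMap.range g := Submodule.linearProjOfIsCompl _ _ hC with hpr
  set eqv : (A ⧸ J₀) ≃ₗ[A] LinearMap.range g :=
    (Submodule.quotEquivOfEq J₀ (LinearMap.ker g) hkerg.symm).trans (g.quotKerEquivRange) with heqv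
  set k : (A ⧸ J₀) →ₗ[A] (A ⧸ m) := Submodule.mapQ J₀ m LinearMap.id (hle m hm) with hk
  set θ' : P →ₗ[A] (A ⧸ m) := (k.comp eqv.symm.toLinearMap).comp pr with hθ'
  have hθ'g : ∀ a : A, θ' (g a) = Submodule.Quotient.mk a := by
    intro a
    have h1 : pr (g a) = ⟨g a, LinearMap.mem_range_self g a⟩ := by
      rw [hpr]
      exact Submodule.linearProjOfIsCompl_apply_left hC ⟨g a, LinearMap.mem_range_self g a⟩
    have h2 : eqv (Submodule.Quotient.mk a) = ⟨g a, LinearMap.mem_range_self g a⟩ := by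
      rw [heqv]
      simp [LinearEquiv.trans_apply, Submodule.quotEquivOfEq_mk]
      rfl
    have h3 : eqv.symm ⟨g a, LinearMap.mem_range_self g a⟩ = Submodule.Quotient.mk a := by
      rw [LinearEquiv.symm_apply_eq]; exact h2.symm
    simp only [hθ', LinearMap.comp_apply, h1, LinearEquiv.coe_coe, h3]
    rw [hk]
    exact Submodule.mapQ_apply _ _ _ _
  have hIsS : IsSimpleModule A (A ⧸ m) :=
    isSimpleModule_iff_quot_maximal.mpr ⟨m, hm, ⟨LinearEquiv.refl A _⟩⟩
  have : Nontrivial (A ⧸ m) := hIsS.nontrivial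
  obtain ⟨x0, hx0⟩ := exists_ne (0 : A ⧸ m)
  obtain ⟨a0, rfl⟩ := Submodule.Quotient.mk_surjective m x0
  have hθ'ne : θ' (g a0) ≠ 0 := by rw [hθ'g]; exact hx0
  have hexi : ∃ i : {x // x ∈ s},
      θ'.comp (LinearMap.single A (fun j : {x // x ∈ s} => A ⧸ (j : Ideal A)) i) ≠ 0 := by
    by_contra hall
    push_neg at hall
    refine hθ'ne ?_
    have : g a0 = ∑ i : {x // x ∈ s}, Pi.single i (g a0 i) := (Finset.univ_sum_single _).symm
    rw [this, map_sum]
    refine Finset.sum_eq_zero fun i _ => ?_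
    have := congrArg (fun f => f (g a0 i)) (hall i)
    simp only [LinearMap.comp_apply, LinearMap.zero_apply, LinearMap.single_apply] at this
    convert this using 2
    rfl
  obtain ⟨i, hi⟩ := hexi
  set θ : (A ⧸ (i : Ideal A)) →ₗ[A] (A ⧸ m) :=
    θ'.comp (LinearMap.single A (fun j : {x // x ∈ s} => A ⧸ (j : Ideal A)) i) with hθ
  have := hsimple i
  have hbij : Function.Bijective θ :=
    ⟨LinearMap.injective_of_ne_zero hi, LinearMap.surjective_of_ne_zero hi⟩
  exact ⟨(i : Ideal A), i.2, ⟨eqS.trans (LinearEquiv.ofBijective θ hbij).symm⟩⟩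


/-- `R` is isomorphic to `Rᵐᵒᵖ` as a left `Rᵐᵒᵖ`-module. -/
def opModuleEquiv (R : Type u) [Ring R] : R ≃ₗ[Rᵐᵒᵖ] Rᵐᵒᵖ where
  toFun := op
  invFun := unop
  map_add' := fun _ _ => rfl
  map_smul' := fun _ _ => rfl
  left_inv := fun _ => rfl
  right_inv := fun _ => rfl

theorem stmt16 {R : Type u} [Ring R] [IsArtinian Rᵐᵒᵖ R] :
    ∃ (n : ℕ) (𝓔 : Fin n → ModuleCat.{u} Rᵐᵒᵖ),
      ∀ (E : Type u) [AddCommGroup E] [Module Rᵐᵒᵖ E],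
        IsIndecomposable Rᵐᵒᵖ E → Module.Injective Rᵐᵒᵖ E →
          ∃ i : Fin n, Nonempty (E ≃ₗ[Rᵐᵒᵖ] 𝓔 i) := by
  classical
  haveI hart : IsArtinian Rᵐᵒᵖ Rᵐᵒᵖ := isArtinian_of_linearEquiv (opModuleEquiv R)
  by_cases hnt : Nontrivial Rᵐᵒᵖ
  · obtain ⟨s, hs, hcls⟩ := finite_simple_classes (A := Rᵐᵒᵖ)
    set n := s.card with hn
    set ms : Fin n → Ideal Rᵐᵒᵖ := fun j => (s.equivFin.symm j : Ideal Rᵐᵒᵖ) with hms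
    set Q : Fin n → Prop := fun j => ∃ M : ModuleCat.{u} Rᵐᵒᵖ,
      IsIndecomposable Rᵐᵒᵖ M ∧ Module.Injective Rᵐᵒᵖ M ∧
      ∃ T : Submodule Rᵐᵒᵖ M, IsSimpleModule Rᵐᵒᵖ T ∧
        Nonempty (T ≃ₗ[Rᵐᵒᵖ] (Rᵐᵒᵖ ⧸ ms j)) with hQ
    set 𝓔 : Fin n → ModuleCat.{u} Rᵐᵒᵖ :=
      fun j => if h : Q j then h.choose else ModuleCat.of Rᵐᵒᵖ PUnit with h𝓔
    refine ⟨n, 𝓔, ?_⟩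
    intro E _ _ hindec hinj
    obtain ⟨x, hx⟩ := hindec.1
    obtain ⟨S, hSsimple⟩ := exists_simple_submodule (A := Rᵐᵒᵖ) hx
    obtain ⟨m, hm, ⟨σ₀⟩⟩ := hcls S hSsimple
    set j : Fin n := s.equivFin ⟨m, hm⟩ with hj
    have hmsj : ms j = m := by simp only [hms, hj, Equiv.symm_apply_apply]
    have hSms : Nonempty (↥S ≃ₗ[Rᵐᵒᵖ] Rᵐᵒᵖ ⧸ ms j) := by rw [hmsj]; exact ⟨σ₀⟩
    have hQj : Q j := ⟨ModuleCat.of Rᵐᵒᵖ E, hindec, hinj, S, hSsimple, hSms⟩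
    refine ⟨j, ?_⟩
    have h𝓔j : 𝓔 j = hQj.choose := by simp only [h𝓔]; exact dif_pos hQj
    rw [h𝓔j]
    obtain ⟨hindec', hinj', T, hTsimple, ⟨τ⟩⟩ := hQj.choose_spec
    have hSne : S ≠ ⊥ := Submodule.nontrivial_iff_ne_bot.mp (IsSimpleModule.nontrivial Rᵐᵒᵖ S)
    have hTne : T ≠ ⊥ := Submodule.nontrivial_iff_ne_bot.mp (IsSimpleModule.nontrivial Rᵐᵒᵖ T)
    have hmj : Nonempty ((Rᵐᵒᵖ ⧸ m) ≃ₗ[Rᵐᵒᵖ] (Rᵐᵒᵖ ⧸ ms j)) := hmsj ▸ ⟨LinearEquiv.refl _ _⟩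
    obtain ⟨κ⟩ := hmj
    exact equiv_of_indec_inj hindec hinj hindec' hinj' hSne hTne
      ((σ₀.trans κ).trans τ.symm)
  · refine ⟨0, fun j => j.elim0, ?_⟩
    intro E _ _ hindec _
    obtain ⟨x, hx⟩ := hindec.1
    rw [not_nontrivial_iff_subsingleton] at hnt
    have h10 : (1 : Rᵐᵒᵖ) = 0 := Subsingleton.elim _ _
    exact absurd (by rw [← one_smul Rᵐᵒᵖ x, h10, zero_smul]) hx
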